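/- Let c ∈ [0,1] and let F be a cdf on ℝ^d with marginals F_1,...,F_d. Let F_1*,...,F_d* be cdfs on ℝ such that cF_i ⪯_0 F_i* for each i (i.e. cF_i(t) − cF_i(s) ≤ F_i*(t) − F_i*(s) for all s ≤ t), let S ⊆ ℝ^d and π_s ∈ [0,1] with cF(s) ≤ π_s for s ∈ S. Then the function G = cF satisfies, for all x ∈ ℝ^d: G(x) ≤ min_i F_i*(x_i) ∧ inf{ π_s + Σ_{i=1}^d (F_i*(x_i) − F_i*(s_i))^+ : s ∈ S }. -/

import Mathlib

open MeasureTheory Filter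

lemma tendsto_aux {α : Type*} [MeasurableSpace α] (κ : Measure α) [IsFiniteMeasure κ]
    (f : α → ℝ) (hf : Measurable f) (a : ℝ) :
    Tendsto (fun n : ℕ => (κ {y | f y ≤ a - n}).toReal) atTop (nhds 0) := by
  have h0 : (⋂ n : ℕ, {y | f y ≤ a - (n : ℝ)}) = ∅ := by
    ext y
    simp only [Set.mem_iInter, Set.mem_setOf_eq, Set.mem_empty_iff_false, iff_false, not_forall,
      not_le]
    obtain ⟨n, hn⟩ := exists_nat_gt (a - f y)
    exact ⟨n, by linarith⟩
  have h1 : Tendsto (fun n : ℕ => κ {y | f y ≤ a - n}) atTop (nhds 0) := by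
    have := tendsto_measure_iInter_atTop (μ := κ) (s := fun n : ℕ => {y | f y ≤ a - n})
      (fun n => (hf measurableSet_Iic).nullMeasurableSet)
      (fun n m hnm y hy => by
        simp only [Set.mem_setOf_eq] at *
        have h : (n:ℝ) ≤ m := by exact_mod_cast hnm
        linarith)
      ⟨0, measure_ne_top κ _⟩
    rwa [h0, measure_empty] at this
  exact (ENNReal.tendsto_toReal (by simp)).comp h1

/-- Improved upper Fréchet–Hoeffding bound for the relaxed class `F^{S,π}_{⪯₀}`:
for `G = c·F` with marginals dominated in 0-th stochastic order by `F_i*` and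
`c·F(s) ≤ π_s` on `S`, one has
`G(x) ≤ min_i F_i*(x_i) ∧ inf{π_s + Σ_i (F_i*(x_i) − F_i*(s_i))⁺ : s ∈ S}`. -/
theorem improved_upper_bound_zero_order {d : ℕ} (c : ℝ) (hc : c ∈ Set.Icc (0 : ℝ) 1)
    (μ : Measure (Fin d → ℝ)) [IsProbabilityMeasure μ]
    (ν : Fin d → Measure ℝ) (hν : ∀ i, IsProbabilityMeasure (ν i))
    (hdom : ∀ (i : Fin d) (u t : ℝ), u ≤ t →
      c * (μ {y : Fin d → ℝ | y i ≤ t}).toReal - c * (μ {y : Fin d → ℝ | y i ≤ u}).toReal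
        ≤ (ν i (Set.Iic t)).toReal - (ν i (Set.Iic u)).toReal)
    (S : Set (Fin d → ℝ)) (π : (Fin d → ℝ) → ℝ)
    (hπ : ∀ s ∈ S, π s ∈ Set.Icc (0 : ℝ) 1)
    (hF : ∀ s ∈ S, c * (μ {y : Fin d → ℝ | ∀ j, y j ≤ s j}).toReal ≤ π s)
    (x : Fin d → ℝ) :
    (∀ i, c * (μ {y : Fin d → ℝ | ∀ j, y j ≤ x j}).toReal ≤ (ν i (Set.Iic (x i))).toReal) ∧
    (∀ s ∈ S, c * (μ {y : Fin d → ℝ | ∀ j, y j ≤ x j}).toReal ≤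
      π s + ∑ i : Fin d, max ((ν i (Set.Iic (x i))).toReal - (ν i (Set.Iic (s i))).toReal) 0) := by
  obtain ⟨hc0, hc1⟩ := hc
  have hAi : ∀ i : Fin d, c * (μ {y : Fin d → ℝ | ∀ j, y j ≤ x j}).toReal
      ≤ c * (μ {y : Fin d → ℝ | y i ≤ x i}).toReal := fun i =>
    mul_le_mul_of_nonneg_left (ENNReal.toReal_mono (measure_ne_top μ _)
      (measure_mono fun y hy => hy i)) hc0
  constructor
  · intro i
    refine (hAi i).trans ?_
    -- limit argument
    have hmar := tendsto_aux μ (fun y => y i) (measurable_pi_apply i) (x i)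
    have hnui := tendsto_aux (ν i) id measurable_id (x i)
    have hg : Tendsto (fun n : ℕ =>
        (ν i (Set.Iic (x i))).toReal - (ν i (Set.Iic (x i - n))).toReal
          + c * (μ {y : Fin d → ℝ | y i ≤ x i - n}).toReal) atTop
        (nhds ((ν i (Set.Iic (x i))).toReal - 0 + c * 0)) := by
      refine ((tendsto_const_nhds.sub ?_).add (tendsto_const_nhds.mul hmar))
      exact hnui
    rw [sub_zero, mul_zero, add_zero] at hg
    refine ge_of_tendsto' hg fun n => ?_
    have := hdom i (x i - n) (x i) (by have : (0:ℝ) ≤ n := Nat.cast_nonneg n; linarith)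
    linarith
  · intro s hs
    set A := {y : Fin d → ℝ | ∀ j, y j ≤ x j} with hA
    set B := {y : Fin d → ℝ | ∀ j, y j ≤ s j} with hB
    set C : Fin d → Set (Fin d → ℝ) := fun i => {y | y i ≤ x i ∧ s i < y i} with hC
    have hsub : A ⊆ B ∪ ⋃ i, C i := by
      intro y hy
      by_cases h : ∀ j, y j ≤ s j
      · exact Or.inl h
      · push_neg at h
        obtain ⟨i, hi⟩ := h
        exact Or.inr (Set.mem_iUnion.2 ⟨i, hy i, hi⟩)
    have hmeas : μ A ≤ μ B + ∑ i : Fin d, μ (C i) :=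
      le_trans (measure_mono hsub) (le_trans (measure_union_le _ _)
        (add_le_add_right (measure_iUnion_fintype_le μ C) _))
    have hreal : (μ A).toReal ≤ (μ B).toReal + ∑ i : Fin d, (μ (C i)).toReal := by
      have hne : μ B + ∑ i : Fin d, μ (C i) ≠ ⊤ := by
        refine ENNReal.add_ne_top.2 ⟨measure_ne_top μ _, ?_⟩
        exact (ENNReal.sum_lt_top.2 fun i _ => measure_lt_top μ _).ne
      have := ENNReal.toReal_mono hne hmeas
      rwa [ENNReal.toReal_add (measure_ne_top μ _)
        (ENNReal.sum_lt_top.2 fun i _ => measure_lt_top μ _).ne,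
        ENNReal.toReal_sum (fun i _ => measure_ne_top μ _)] at this
    have hmul : c * (μ A).toReal ≤ c * (μ B).toReal + ∑ i : Fin d, c * (μ (C i)).toReal := by
      rw [← Finset.mul_sum, ← mul_add]
      exact mul_le_mul_of_nonneg_left hreal hc0
    refine hmul.trans (add_le_add (hF s hs) (Finset.sum_le_sum fun i _ => ?_))
    by_cases hsx : s i ≤ x i
    · have hCeq : C i = {y : Fin d → ℝ | y i ≤ x i} \ {y : Fin d → ℝ | y i ≤ s i} := by
        ext y
        simp only [hC, Set.mem_setOf_eq, Set.mem_diff, not_le]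
      have hdiff : μ (C i) = μ {y : Fin d → ℝ | y i ≤ x i} - μ {y : Fin d → ℝ | y i ≤ s i} := by
        rw [hCeq]
        exact measure_diff (fun y hy => le_trans hy hsx)
          ((measurable_pi_apply i measurableSet_Iic).nullMeasurableSet) (measure_ne_top μ _)
      have hle : μ {y : Fin d → ℝ | y i ≤ s i} ≤ μ {y : Fin d → ℝ | y i ≤ x i} :=
        measure_mono fun y hy => le_trans hy hsx
      have htr : (μ (C i)).toReal
          = (μ {y : Fin d → ℝ | y i ≤ x i}).toReal - (μ {y : Fin d → ℝ | y i ≤ s i}).toReal := by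
        rw [hdiff, ENNReal.toReal_sub_of_le hle (measure_ne_top μ _)]
      rw [htr, mul_sub]
      exact le_trans (hdom i (s i) (x i) hsx) (le_max_left _ _)
    · have hCempty : C i = ∅ := by
        ext y
        simp only [hC, Set.mem_setOf_eq, Set.mem_empty_iff_false, iff_false, not_and, not_lt]
        intro hy
        linarith [lt_of_not_ge hsx]
      rw [hCempty, measure_empty]
      simp [le_max_right]
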